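/- Let D ⊊ ℝⁿ be an open set with nonempty boundary ∂D. Then the function ĉ_D(x,y) = sup_{p ∈ ∂D} |x−y| / max(|x−p|, |y−p|) is a metric on D: it is nonnegative, symmetric, vanishes exactly when x = y, and satisfies the triangle inequality ĉ_D(x,y) ≤ ĉ_D(x,z) + ĉ_D(z,y) for all x, y, z ∈ D. -/

import Mathlib

open Set Metric

/-- The `ĉ` metric: `ĉ_D(x,y) = sup_{p ∈ ∂D} |x−y| / max(|x−p|, |y−p|)`. -/
noncomputable def ctilde {E : Type*} [SeminormedAddCommGroup E] (D : Set E) (x y : E) : ℝ :=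
  ⨆ p : frontier D, ‖x - y‖ / max ‖x - (p : E)‖ ‖y - (p : E)‖

private lemma aux_div (dxy dxz dzy a b c : ℝ) (ha : 0 < a) (hb : 0 < b) (hc : 0 < c)
    (hba : b ≤ a) (htri : dxy ≤ dxz + dzy) (hpt : dxy * c ≤ dxz * b + dzy * a)
    (hxz : 0 ≤ dxz) (hzy : 0 ≤ dzy) :
    dxy / a ≤ dxz / max a c + dzy / max c b := by
  rcases le_total c a with hca | hac
  · rw [max_eq_left hca]
    have hmcb : max c b ≤ a := max_le hca hba
    have hmcb0 : 0 < max c b := lt_max_of_lt_left hc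
    calc dxy / a ≤ (dxz + dzy) / a := by gcongr
      _ = dxz / a + dzy / a := add_div _ _ _
      _ ≤ dxz / a + dzy / max c b := by
          gcongr
  · rw [max_eq_right hac, max_eq_left (hba.trans hac)]
    have key : dxy * c ≤ (dxz + dzy) * a := by
      calc dxy * c ≤ dxz * b + dzy * a := hpt
        _ ≤ dxz * a + dzy * a := by gcongr
        _ = (dxz + dzy) * a := (add_mul _ _ _).symm
    rw [← add_div]
    rw [div_le_div_iff₀ ha hc]
    linarith [key]

private lemma pointwise {n : ℕ} (x y z p : EuclideanSpace ℝ (Fin n))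
    (hx : x ≠ p) (hy : y ≠ p) (hz : z ≠ p) :
    ‖x - y‖ / max ‖x - p‖ ‖y - p‖ ≤
      ‖x - z‖ / max ‖x - p‖ ‖z - p‖ + ‖z - y‖ / max ‖z - p‖ ‖y - p‖ := by
  have ha : (0:ℝ) < ‖x - p‖ := norm_pos_iff.2 (sub_ne_zero.2 hx)
  have hb : (0:ℝ) < ‖y - p‖ := norm_pos_iff.2 (sub_ne_zero.2 hy)
  have hc : (0:ℝ) < ‖z - p‖ := norm_pos_iff.2 (sub_ne_zero.2 hz)
  have htri : ‖x - y‖ ≤ ‖x - z‖ + ‖z - y‖ := norm_sub_le_norm_sub_add_norm_sub x z y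
  have hpt : ‖x - y‖ * ‖z - p‖ ≤ ‖x - z‖ * ‖y - p‖ + ‖z - y‖ * ‖x - p‖ := by
    have := EuclideanGeometry.mul_dist_le_mul_dist_add_mul_dist x z y p
    simpa [dist_eq_norm] using this
  rcases le_total ‖y - p‖ ‖x - p‖ with hba | hab
  · rw [max_eq_left hba]
    exact aux_div _ _ _ _ _ _ ha hb hc hba htri hpt (norm_nonneg _) (norm_nonneg _)
  · rw [max_eq_right hab, norm_sub_rev x y]
    have hpt' : ‖y - x‖ * ‖z - p‖ ≤ ‖y - z‖ * ‖x - p‖ + ‖z - x‖ * ‖y - p‖ := by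
      have := EuclideanGeometry.mul_dist_le_mul_dist_add_mul_dist y z x p
      simpa [dist_eq_norm] using this
    have htri' : ‖y - x‖ ≤ ‖y - z‖ + ‖z - x‖ := norm_sub_le_norm_sub_add_norm_sub y z x
    have h := aux_div ‖y - x‖ ‖y - z‖ ‖z - x‖ ‖y - p‖ ‖x - p‖ ‖z - p‖
      hb ha hc hab htri' hpt' (norm_nonneg _) (norm_nonneg _)
    rw [norm_sub_rev y z, norm_sub_rev z x] at h
    rw [max_comm ‖y - p‖ ‖z - p‖, max_comm ‖z - p‖ ‖x - p‖] at h
    rw [max_comm ‖x - p‖ ‖z - p‖] at h ⊢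
    linarith [h]

/-- For an open proper subset `D ⊊ ℝⁿ` with nonempty boundary, `ĉ_D` is a metric on `D`. -/
theorem ctilde_is_metric_euclidean {n : ℕ} (hn : 1 ≤ n)
    (D : Set (EuclideanSpace ℝ (Fin n))) (hD : IsOpen D) (hDproper : D ≠ Set.univ)
    (hfr : (frontier D).Nonempty) :
    (∀ x ∈ D, ∀ y ∈ D, 0 ≤ ctilde D x y) ∧
    (∀ x ∈ D, ∀ y ∈ D, ctilde D x y = ctilde D y x) ∧
    (∀ x ∈ D, ∀ y ∈ D, (ctilde D x y = 0 ↔ x = y)) ∧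
    (∀ x ∈ D, ∀ y ∈ D, ∀ z ∈ D, ctilde D x y ≤ ctilde D x z + ctilde D z y) := by
  haveI : Nonempty (frontier D) := hfr.to_subtype
  -- points of D are distinct from frontier points
  have hne : ∀ x ∈ D, ∀ p : frontier D, x ≠ (p : EuclideanSpace ℝ (Fin n)) := by
    intro x hx p hxp
    have h2 : (p : EuclideanSpace ℝ (Fin n)) ∈ closure D \ D := hD.frontier_eq ▸ p.2
    exact h2.2 (hxp ▸ hx)
  have hpos : ∀ x ∈ D, ∀ p : frontier D, (0:ℝ) < ‖x - (p : EuclideanSpace ℝ (Fin n))‖ := by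
    intro x hx p
    exact norm_pos_iff.2 (sub_ne_zero.2 (hne x hx p))
  have hbdd : ∀ x ∈ D, ∀ y ∈ D, BddAbove (Set.range fun p : frontier D =>
      ‖x - y‖ / max ‖x - (p : EuclideanSpace ℝ (Fin n))‖ ‖y - (p : EuclideanSpace ℝ (Fin n))‖) := by
    intro x hx y hy
    refine ⟨2, ?_⟩
    rintro r ⟨p, rfl⟩
    have hmax : (0:ℝ) < max ‖x - (p : EuclideanSpace ℝ (Fin n))‖ ‖y - (p : EuclideanSpace ℝ (Fin n))‖ :=
      lt_max_of_lt_left (hpos x hx p)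
    rw [div_le_iff₀ hmax]
    have h1 : ‖x - y‖ ≤ ‖x - (p : EuclideanSpace ℝ (Fin n))‖ + ‖(p : EuclideanSpace ℝ (Fin n)) - y‖ :=
      norm_sub_le_norm_sub_add_norm_sub _ _ _
    have h2 : ‖(p : EuclideanSpace ℝ (Fin n)) - y‖ = ‖y - (p : EuclideanSpace ℝ (Fin n))‖ :=
      norm_sub_rev _ _
    have h3 : ‖x - (p : EuclideanSpace ℝ (Fin n))‖ ≤ max ‖x - (p : EuclideanSpace ℝ (Fin n))‖ ‖y - (p : EuclideanSpace ℝ (Fin n))‖ := le_max_left _ _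
    have h4 : ‖y - (p : EuclideanSpace ℝ (Fin n))‖ ≤ max ‖x - (p : EuclideanSpace ℝ (Fin n))‖ ‖y - (p : EuclideanSpace ℝ (Fin n))‖ := le_max_right _ _
    nlinarith
  refine ⟨?_, ?_, ?_, ?_⟩
  · intro x hx y hy
    obtain ⟨p⟩ := (inferInstance : Nonempty (frontier D))
    refine le_ciSup_of_le (hbdd x hx y hy) p ?_
    positivity
  · intro x hx y hy
    unfold ctilde
    congr 1
    funext p
    rw [norm_sub_rev, max_comm]
  · intro x hx y hy
    constructor
    · intro h
      by_contra hxy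
      obtain ⟨p⟩ := (inferInstance : Nonempty (frontier D))
      have hmax : (0:ℝ) < max ‖x - (p : EuclideanSpace ℝ (Fin n))‖ ‖y - (p : EuclideanSpace ℝ (Fin n))‖ :=
        lt_max_of_lt_left (hpos x hx p)
      have hterm : (0:ℝ) < ‖x - y‖ / max ‖x - (p : EuclideanSpace ℝ (Fin n))‖ ‖y - (p : EuclideanSpace ℝ (Fin n))‖ :=
        div_pos (norm_pos_iff.2 (sub_ne_zero.2 hxy)) hmax
      have := le_ciSup_of_le (hbdd x hx y hy) p (le_refl _)
      rw [show (⨆ p : frontier D, ‖x - y‖ / max ‖x - (p : EuclideanSpace ℝ (Fin n))‖ ‖y - (p : EuclideanSpace ℝ (Fin n))‖) = ctilde D x y from rfl, h] at this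
      linarith
    · rintro rfl
      unfold ctilde
      simp
  · intro x hx y hy z hz
    unfold ctilde
    refine ciSup_le fun p => ?_
    have h := pointwise x y z (p : EuclideanSpace ℝ (Fin n)) (hne x hx p) (hne y hy p) (hne z hz p)
    refine h.trans (add_le_add ?_ ?_)
    · exact le_ciSup_of_le (hbdd x hx z hz) p (le_refl _)
    · exact le_ciSup_of_le (hbdd z hz y hy) p (le_refl _)
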